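/- Let B_0,…,B_{m−1} be orthonormal bases of ℂ^d, with B_a = {e^a_0,…,e^a_{d−1}}, let v_0,…,v_{m−1} be positive reals with ∑_a v_a = 1, and write π^a_j = e^a_j (e^a_j)† for the rank-one projector matrices. Suppose the linear map 𝓕 on d×d complex matrices defined by 𝓕(M) = ∑_{a,j} v_a tr(π^a_j M) π^a_j is invertible (informational completeness), and set R^a_j = 𝓕⁻¹(π^a_j) (the canonical dual). Let Q^a_j be any d×d complex matrices satisfying the dual frame condition ∑_{a,j} v_a tr(π^a_j M) Q^a_j = M for every d×d matrix M. Then ∑_a v_a ( ∑_j ‖Q^a_j‖² − (1/d)‖∑_j Q^a_j‖² ) ≥ ∑_a v_a ( ∑_j ‖R^a_j‖² − (1/d)‖∑_j R^a_j‖² ), where ‖·‖ is the Frobenius norm, with equality if and only if there exist matrices D_0,…,D_{m−1} with ∑_a v_a D_a = 0 such that Q^a_j = R^a_j + D_a for all a and j. -/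

import Mathlib

open Matrix

/-- The rank-one projection matrix `x x†` associated to a unit vector `x ∈ ℂ^d`. -/
noncomputable def rankOneProj {d : ℕ} (x : EuclideanSpace ℂ (Fin d)) :
    Matrix (Fin d) (Fin d) ℂ :=
  Matrix.of fun r s => x r * (starRingEnd ℂ) (x s)

/-- The squared Frobenius (Hilbert–Schmidt) norm `‖A‖² = tr(A†A)` of a complex matrix. -/
noncomputable def frobSq {d : ℕ} (A : Matrix (Fin d) (Fin d) ℂ) : ℝ :=
  ((Aᴴ * A).trace).re

namespace CDF
variable {d : ℕ}

noncomputable def ip (A B : Matrix (Fin d) (Fin d) ℂ) : ℂ := (Aᴴ * B).trace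

lemma ip_eq (A B : Matrix (Fin d) (Fin d) ℂ) :
    ip A B = ∑ p, ∑ q, (starRingEnd ℂ) (A p q) * B p q := by
  simp only [ip, Matrix.trace, Matrix.diag, Matrix.mul_apply, Matrix.conjTranspose_apply]
  exact Finset.sum_comm

lemma ip_add_left (A B C : Matrix (Fin d) (Fin d) ℂ) : ip (A + B) C = ip A C + ip B C := by
  simp [ip, Matrix.conjTranspose_add, Matrix.add_mul, Matrix.trace_add]

lemma ip_add_right (A B C : Matrix (Fin d) (Fin d) ℂ) : ip A (B + C) = ip A B + ip A C := by
  simp [ip, Matrix.mul_add, Matrix.trace_add]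

lemma ip_smul_left (c : ℂ) (A B : Matrix (Fin d) (Fin d) ℂ) :
    ip (c • A) B = (starRingEnd ℂ) c * ip A B := by
  simp [ip, Matrix.conjTranspose_smul, Matrix.smul_mul, Matrix.trace_smul, smul_eq_mul]

lemma ip_smul_right (c : ℂ) (A B : Matrix (Fin d) (Fin d) ℂ) :
    ip A (c • B) = c * ip A B := by
  simp [ip, Matrix.mul_smul, Matrix.trace_smul, smul_eq_mul]

lemma ip_sum_left {ι : Type*} (s : Finset ι) (f : ι → Matrix (Fin d) (Fin d) ℂ)
    (B : Matrix (Fin d) (Fin d) ℂ) : ip (∑ i ∈ s, f i) B = ∑ i ∈ s, ip (f i) B := by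
  simp [ip, Matrix.conjTranspose_sum, Finset.sum_mul, Matrix.trace_sum]

lemma ip_sum_right {ι : Type*} (s : Finset ι) (f : ι → Matrix (Fin d) (Fin d) ℂ)
    (A : Matrix (Fin d) (Fin d) ℂ) : ip A (∑ i ∈ s, f i) = ∑ i ∈ s, ip A (f i) := by
  simp [ip, Finset.mul_sum, Matrix.trace_sum]

lemma ip_conj (A B : Matrix (Fin d) (Fin d) ℂ) : (starRingEnd ℂ) (ip A B) = ip B A := by
  simp [ip_eq, map_sum, _root_.map_mul, mul_comm]

lemma ip_zero_right (A : Matrix (Fin d) (Fin d) ℂ) : ip A 0 = 0 := by simp [ip_eq]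

lemma frobSq_eq_ip (A : Matrix (Fin d) (Fin d) ℂ) : frobSq A = (ip A A).re := rfl

lemma frobSq_eq_sum (A : Matrix (Fin d) (Fin d) ℂ) :
    frobSq A = ∑ p, ∑ q, Complex.normSq (A p q) := by
  rw [frobSq_eq_ip, ip_eq]
  rw [Complex.re_sum]
  refine Finset.sum_congr rfl fun p _ => ?_
  rw [Complex.re_sum]
  refine Finset.sum_congr rfl fun q _ => ?_
  simp [Complex.normSq_apply, Complex.mul_re, Complex.conj_re, Complex.conj_im]

lemma frobSq_nonneg (A : Matrix (Fin d) (Fin d) ℂ) : 0 ≤ frobSq A := by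
  rw [frobSq_eq_sum]
  exact Finset.sum_nonneg fun p _ => Finset.sum_nonneg fun q _ => Complex.normSq_nonneg _

lemma frobSq_eq_zero_iff (A : Matrix (Fin d) (Fin d) ℂ) : frobSq A = 0 ↔ A = 0 := by
  rw [frobSq_eq_sum]
  constructor
  · intro h
    ext p q
    have h1 := (Finset.sum_eq_zero_iff_of_nonneg (fun p _ => Finset.sum_nonneg fun q _ => Complex.normSq_nonneg _)).mp h p (Finset.mem_univ p)
    have h2 := (Finset.sum_eq_zero_iff_of_nonneg (fun q _ => Complex.normSq_nonneg _)).mp h1 q (Finset.mem_univ q)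
    simpa using Complex.normSq_eq_zero.mp h2
  · intro h; simp [h]

lemma frobSq_zero : frobSq (0 : Matrix (Fin d) (Fin d) ℂ) = 0 := by simp [frobSq_eq_sum]

lemma frobSq_add (A B : Matrix (Fin d) (Fin d) ℂ) :
    frobSq (A + B) = frobSq A + frobSq B + 2 * (ip A B).re := by
  have h : (ip B A).re = (ip A B).re := by
    rw [← ip_conj A B, Complex.conj_re]
  rw [frobSq_eq_ip, ip_add_left, ip_add_right, ip_add_right]
  simp only [Complex.add_re, frobSq_eq_ip, h]
  ring

lemma frobSq_real_smul (r : ℝ) (A : Matrix (Fin d) (Fin d) ℂ) :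
    frobSq ((r : ℂ) • A) = r ^ 2 * frobSq A := by
  rw [frobSq_eq_ip, ip_smul_left, ip_smul_right, frobSq_eq_ip]
  rw [Complex.conj_ofReal, ← mul_assoc, ← Complex.ofReal_mul, Complex.re_ofReal_mul]
  ring

lemma trace_pi_mul (x : EuclideanSpace ℂ (Fin d)) (M : Matrix (Fin d) (Fin d) ℂ) :
    (rankOneProj x * M).trace = ip (rankOneProj x) M := by
  simp only [ip_eq, rankOneProj, Matrix.trace, Matrix.diag, Matrix.mul_apply, Matrix.of_apply,
    _root_.map_mul, Complex.conj_conj, RingHomCompTriple.comp_apply, RingHom.id_apply]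
  rw [Finset.sum_comm]
  refine Finset.sum_congr rfl fun p _ => Finset.sum_congr rfl fun q _ => by ring

lemma sum_rankOneProj (hd : 0 < d) {f : Fin d → EuclideanSpace ℂ (Fin d)}
    (hf : Orthonormal ℂ f) : ∑ j, rankOneProj (f j) = 1 := by
  haveI : Nonempty (Fin d) := ⟨⟨0, hd⟩⟩
  have hcard : Fintype.card (Fin d) = Module.finrank ℂ (EuclideanSpace ℂ (Fin d)) := by
    rw [Fintype.card_fin, finrank_euclideanSpace_fin]
  have hco := coe_basisOfLinearIndependentOfCardEqFinrank hf.linearIndependent hcard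
  let b : OrthonormalBasis (Fin d) ℂ (EuclideanSpace ℂ (Fin d)) :=
    (basisOfLinearIndependentOfCardEqFinrank hf.linearIndependent hcard).toOrthonormalBasis
      (by rwa [hco])
  have hb : ∀ j, b j = f j := fun j => by
    simp only [b, Module.Basis.coe_toOrthonormalBasis]
    rw [hco]
  ext r s
  have h := b.sum_inner_mul_inner (EuclideanSpace.single r 1) (EuclideanSpace.single s 1)
  simp only [hb, EuclideanSpace.inner_single_left, EuclideanSpace.inner_single_right,
    _root_.map_one, one_mul, mul_one] at h
  simpa [rankOneProj, Matrix.sum_apply, Matrix.one_apply, EuclideanSpace.single_apply,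
    eq_comm, apply_ite (starRingEnd ℂ)] using h

lemma trace_rankOneProj {f : Fin d → EuclideanSpace ℂ (Fin d)} (hf : Orthonormal ℂ f)
    (j : Fin d) : (rankOneProj (f j)).trace = 1 := by
  have h : (inner ℂ (f j) (f j) : ℂ) = 1 := by simpa using orthonormal_iff_ite.mp hf j j
  rw [← h]
  simp only [rankOneProj, Matrix.trace, Matrix.diag, Matrix.of_apply]
  rw [PiLp.inner_apply]
  refine Finset.sum_congr rfl fun r _ => ?_
  rw [RCLike.inner_apply]

lemma ip_stdBasis (A : Matrix (Fin d) (Fin d) ℂ) (p q : Fin d) :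
    ip A (Matrix.single p q 1) = (starRingEnd ℂ) (A p q) := by
  simp [ip_eq, Matrix.single, Matrix.of_apply, mul_ite, ite_and, Finset.sum_ite_eq,
    Finset.sum_ite_eq']

lemma ip_neg_right (A B : Matrix (Fin d) (Fin d) ℂ) : ip A (-B) = - ip A B := by
  have h := ip_smul_right (-1 : ℂ) A B
  simpa using h

lemma frobSq_sub (A B : Matrix (Fin d) (Fin d) ℂ) :
    frobSq (A - B) = frobSq A + frobSq B - 2 * (ip A B).re := by
  have hneg : frobSq (-B) = frobSq B := by
    have h := frobSq_real_smul (-1) B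
    simpa using h
  rw [sub_eq_add_neg, frobSq_add, hneg, ip_neg_right, Complex.neg_re]
  ring

lemma sum_comm3 {α β γ M : Type*} [Fintype α] [Fintype β] [Fintype γ] [AddCommMonoid M]
    (f : α → β → γ → M) :
    ∑ a, ∑ b, ∑ c, f a b c = ∑ c, ∑ a, ∑ b, f a b c := by
  calc ∑ a, ∑ b, ∑ c, f a b c = ∑ a, ∑ c, ∑ b, f a b c :=
        Finset.sum_congr rfl fun a _ => Finset.sum_comm
    _ = ∑ c, ∑ a, ∑ b, f a b c := Finset.sum_comm

lemma sum_swap4 {α β γ δ M : Type*} [Fintype α] [Fintype β] [Fintype γ] [Fintype δ]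
    [AddCommMonoid M] (f : α → β → γ → δ → M) :
    ∑ a, ∑ b, ∑ p, ∑ q, f a b p q = ∑ p, ∑ q, ∑ a, ∑ b, f a b p q := by
  calc ∑ a, ∑ b, ∑ p, ∑ q, f a b p q = ∑ p, ∑ a, ∑ b, ∑ q, f a b p q :=
        sum_comm3 fun a b p => ∑ q, f a b p q
    _ = ∑ p, ∑ q, ∑ a, ∑ b, f a b p q :=
        Finset.sum_congr rfl fun p _ => sum_comm3 fun a b q => f a b p q

end CDF

set_option maxHeartbeats 1000000 in
open CDF in
/-- **Optimality of the canonical dual frame.** For an IC-POVM `{v_a π^a_j}` built from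
orthonormal bases, any reconstruction OVD `Q` satisfies
`∑_a v_a (∑_j ‖Q^a_j‖² − (1/d)‖∑_j Q^a_j‖²) ≥ ∑_a v_a (∑_j ‖R^a_j‖² − (1/d)‖∑_j R^a_j‖²)`
where `R = 𝓕⁻¹ ∘ π` is the canonical dual, with equality iff `Q^a_j = R^a_j + D_a`
for some matrices `D_a` with `∑_a v_a D_a = 0`. -/
theorem canonical_dual_frame_optimal (d m : ℕ) (hd : 0 < d)
    (e : Fin m → Fin d → EuclideanSpace ℂ (Fin d)) (he : ∀ a, Orthonormal ℂ (e a))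
    (v : Fin m → ℝ) (hv : ∀ a, 0 < v a) (hvsum : ∑ a, v a = 1)
    (𝓕 : Matrix (Fin d) (Fin d) ℂ → Matrix (Fin d) (Fin d) ℂ)
    (h𝓕 : ∀ M, 𝓕 M = ∑ a : Fin m, ∑ j : Fin d,
      ((v a : ℂ) * (rankOneProj (e a j) * M).trace) • rankOneProj (e a j))
    (hbij : Function.Bijective 𝓕)
    (R : Fin m → Fin d → Matrix (Fin d) (Fin d) ℂ)
    (hR : ∀ a j, 𝓕 (R a j) = rankOneProj (e a j))
    (Q : Fin m → Fin d → Matrix (Fin d) (Fin d) ℂ)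
    (hQ : ∀ M : Matrix (Fin d) (Fin d) ℂ,
      ∑ a : Fin m, ∑ j : Fin d,
        ((v a : ℂ) * (rankOneProj (e a j) * M).trace) • Q a j = M) :
    (∑ a, v a * ((∑ j, frobSq (Q a j)) - (d : ℝ)⁻¹ * frobSq (∑ j, Q a j))
      ≥ ∑ a, v a * ((∑ j, frobSq (R a j)) - (d : ℝ)⁻¹ * frobSq (∑ j, R a j))) ∧
    ((∑ a, v a * ((∑ j, frobSq (Q a j)) - (d : ℝ)⁻¹ * frobSq (∑ j, Q a j))
        = ∑ a, v a * ((∑ j, frobSq (R a j)) - (d : ℝ)⁻¹ * frobSq (∑ j, R a j))) ↔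
      ∃ D : Fin m → Matrix (Fin d) (Fin d) ℂ,
        (∑ a, (v a : ℂ) • D a = 0) ∧ ∀ a j, Q a j = R a j + D a) := by
  classical
  have hdR : (0:ℝ) < (d:ℝ) := by exact_mod_cast hd
  have hdC : (d:ℂ) ≠ 0 := by
    exact Nat.cast_ne_zero.mpr hd.ne'
  have hcast : ((d:ℂ))⁻¹ = (((d:ℝ)⁻¹ : ℝ) : ℂ) := by push_cast; rfl
  -- linearity of 𝓕
  have Fadd : ∀ A B, 𝓕 (A + B) = 𝓕 A + 𝓕 B := by
    intro A B
    simp only [h𝓕, Matrix.mul_add, Matrix.trace_add, mul_add, add_smul,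
      Finset.sum_add_distrib]
  have Fsmul : ∀ (c : ℂ) (A), 𝓕 (c • A) = c • 𝓕 A := by
    intro c A
    simp only [h𝓕, Matrix.mul_smul, Matrix.trace_smul, smul_eq_mul, Finset.smul_sum,
      smul_smul]
    refine Finset.sum_congr rfl fun a _ => Finset.sum_congr rfl fun j _ => ?_
    rw [mul_left_comm]
  have F0 : 𝓕 0 = 0 := by
    have h := Fsmul 0 0
    simpa using h
  have Fsum0 : ∀ {ι : Type} (s : Finset ι) (X : ι → Matrix (Fin d) (Fin d) ℂ),
      𝓕 (∑ i ∈ s, X i) = ∑ i ∈ s, 𝓕 (X i) := by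
    intro ι s X
    induction s using Finset.cons_induction with
    | empty => simpa using F0
    | cons i s hi ih => rw [Finset.sum_cons, Finset.sum_cons, Fadd, ih]
  have Fsum1 : ∀ (X : Fin d → Matrix (Fin d) (Fin d) ℂ),
      𝓕 (∑ j, X j) = ∑ j, 𝓕 (X j) := fun X => Fsum0 _ X
  have Fsum2 : ∀ (c : Fin m → Fin d → ℂ) (X : Fin m → Fin d → Matrix (Fin d) (Fin d) ℂ),
      𝓕 (∑ a, ∑ j, c a j • X a j) = ∑ a, ∑ j, c a j • 𝓕 (X a j) := by
    intro c X
    rw [Fsum0]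
    refine Finset.sum_congr rfl fun a _ => ?_
    rw [Fsum0]
    exact Finset.sum_congr rfl fun j _ => Fsmul _ _
  have hinj := hbij.1
  -- basic projector facts
  have hπtr : ∀ a j (M : Matrix (Fin d) (Fin d) ℂ),
      (rankOneProj (e a j) * M).trace = ip (rankOneProj (e a j)) M :=
    fun a j M => trace_pi_mul _ M
  have hπsum : ∀ a, ∑ j, rankOneProj (e a j) = 1 := fun a => sum_rankOneProj hd (he a)
  have hπtr1 : ∀ a j, (rankOneProj (e a j) * 1).trace = 1 := by
    intro a j
    rw [Matrix.mul_one]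
    exact trace_rankOneProj (he a) j
  -- 𝓕 1 = 1
  have hF1 : 𝓕 (1 : Matrix (Fin d) (Fin d) ℂ) = 1 := by
    have step1 : (∑ a : Fin m, ∑ j : Fin d,
          ((v a:ℂ) * (rankOneProj (e a j) * 1).trace) • rankOneProj (e a j))
        = ∑ a : Fin m, (v a:ℂ) • ∑ j : Fin d, rankOneProj (e a j) := by
      refine Finset.sum_congr rfl fun a _ => ?_
      rw [Finset.smul_sum]
      refine Finset.sum_congr rfl fun j _ => ?_
      rw [hπtr1 a j, mul_one]
    have step2 : (∑ a : Fin m, (v a:ℂ) • ∑ j : Fin d, rankOneProj (e a j))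
        = ∑ a : Fin m, (v a:ℂ) • (1 : Matrix (Fin d) (Fin d) ℂ) :=
      Finset.sum_congr rfl fun a _ => by rw [hπsum a]
    have step3 : (∑ a : Fin m, (v a:ℂ) • (1 : Matrix (Fin d) (Fin d) ℂ)) = 1 := by
      rw [← Finset.sum_smul,
        show (∑ a, ((v a:ℝ):ℂ)) = ((∑ a, v a : ℝ) : ℂ) from by push_cast; rfl, hvsum]
      simp
    rw [h𝓕, step1, step2, step3]
  -- ∑_j R a j = 1
  have hsumR : ∀ a, ∑ j, R a j = 1 := by
    intro a
    apply hinj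
    have step1 : (∑ j : Fin d, 𝓕 (R a j)) = ∑ j : Fin d, rankOneProj (e a j) :=
      Finset.sum_congr rfl fun j _ => hR a j
    rw [Fsum1, hF1, step1, hπsum a]
  -- R is a dual
  have hRdual : ∀ M, ∑ a, ∑ j, ((v a:ℂ) * (rankOneProj (e a j) * M).trace) • R a j = M := by
    intro M
    apply hinj
    have step1 : (∑ a : Fin m, ∑ j : Fin d,
          ((v a:ℂ) * (rankOneProj (e a j) * M).trace) • 𝓕 (R a j))
        = ∑ a : Fin m, ∑ j : Fin d,
          ((v a:ℂ) * (rankOneProj (e a j) * M).trace) • rankOneProj (e a j) :=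
      Finset.sum_congr rfl fun a _ => Finset.sum_congr rfl fun j _ => by rw [hR]
    rw [Fsum2, step1, ← h𝓕 M]
  -- the difference family
  set E : Fin m → Fin d → Matrix (Fin d) (Fin d) ℂ := fun a j => Q a j - R a j with hE_def
  have hQRE : ∀ a j, Q a j = R a j + E a j := by
    intro a j; simp [hE_def]
  have hE : ∀ M, ∑ a, ∑ j, ((v a:ℂ) * (rankOneProj (e a j) * M).trace) • E a j = 0 := by
    intro M
    have step1 : (∑ a : Fin m, ∑ j : Fin d,
          ((v a:ℂ) * (rankOneProj (e a j) * M).trace) • E a j)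
        = (∑ a : Fin m, ∑ j : Fin d, ((v a:ℂ) * (rankOneProj (e a j) * M).trace) • Q a j)
          - ∑ a : Fin m, ∑ j : Fin d, ((v a:ℂ) * (rankOneProj (e a j) * M).trace) • R a j := by
      rw [← Finset.sum_sub_distrib]
      refine Finset.sum_congr rfl fun a _ => ?_
      rw [← Finset.sum_sub_distrib]
      refine Finset.sum_congr rfl fun j _ => ?_
      rw [hE_def, smul_sub]
    rw [step1, hQ M, hRdual M, sub_self]
  -- self-adjointness of 𝓕
  have selfadj : ∀ A B, ip (𝓕 A) B = ip A (𝓕 B) := by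
    intro A B
    rw [h𝓕 A, h𝓕 B, ip_sum_left, ip_sum_right]
    refine Finset.sum_congr rfl fun a _ => ?_
    rw [ip_sum_left, ip_sum_right]
    refine Finset.sum_congr rfl fun j _ => ?_
    rw [ip_smul_left, ip_smul_right, hπtr, hπtr, _root_.map_mul, Complex.conj_ofReal,
      ip_conj]
    ring
  -- preimages of the standard basis matrices
  choose Mst hMst using fun p q => hbij.2 (Matrix.single p q (1:ℂ))
  have hconjR : ∀ a j p q, (starRingEnd ℂ) (R a j p q)
      = (rankOneProj (e a j) * Mst p q).trace := by
    intro a j p q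
    rw [← ip_stdBasis (R a j) p q, ← hMst p q, ← selfadj, hR, hπtr]
  -- first cross term vanishes
  have hcross1 : ∑ a, ∑ j, (v a : ℂ) * ip (R a j) (E a j) = 0 := by
    have key : ∀ p q, ∑ a, ∑ j,
        ((v a:ℂ) * (rankOneProj (e a j) * Mst p q).trace) * (E a j) p q = 0 := by
      intro p q
      have h0 := congrArg (fun M : Matrix (Fin d) (Fin d) ℂ => M p q) (hE (Mst p q))
      simpa [Matrix.sum_apply, Matrix.smul_apply, smul_eq_mul] using h0
    have step1 : (∑ a : Fin m, ∑ j : Fin d, (v a : ℂ) * ip (R a j) (E a j))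
        = ∑ a : Fin m, ∑ j : Fin d, ∑ p : Fin d, ∑ q : Fin d,
            ((v a:ℂ) * (rankOneProj (e a j) * Mst p q).trace) * (E a j) p q := by
      refine Finset.sum_congr rfl fun a _ => Finset.sum_congr rfl fun j _ => ?_
      rw [ip_eq, Finset.mul_sum]
      refine Finset.sum_congr rfl fun p _ => ?_
      rw [Finset.mul_sum]
      refine Finset.sum_congr rfl fun q _ => ?_
      rw [hconjR]
      ring
    have step2 : (∑ a : Fin m, ∑ j : Fin d, ∑ p : Fin d, ∑ q : Fin d,
          ((v a:ℂ) * (rankOneProj (e a j) * Mst p q).trace) * (E a j) p q)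
        = ∑ p : Fin d, ∑ q : Fin d, ∑ a : Fin m, ∑ j : Fin d,
            ((v a:ℂ) * (rankOneProj (e a j) * Mst p q).trace) * (E a j) p q :=
      sum_swap4 _
    have step3 : (∑ p : Fin d, ∑ q : Fin d, ∑ a : Fin m, ∑ j : Fin d,
          ((v a:ℂ) * (rankOneProj (e a j) * Mst p q).trace) * (E a j) p q) = 0 :=
      Finset.sum_eq_zero fun p _ => Finset.sum_eq_zero fun q _ => key p q
    rw [step1, step2, step3]
  -- weighted sum of row sums of E vanishes
  have hE1 : ∑ a, (v a:ℂ) • (∑ j, E a j) = 0 := by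
    have step1 : (∑ a : Fin m, (v a:ℂ) • (∑ j : Fin d, E a j))
        = ∑ a : Fin m, ∑ j : Fin d, ((v a:ℂ) * (rankOneProj (e a j) * 1).trace) • E a j := by
      refine Finset.sum_congr rfl fun a _ => ?_
      rw [Finset.smul_sum]
      exact Finset.sum_congr rfl fun j _ => by rw [hπtr1, mul_one]
    rw [step1, hE 1]
  -- second cross term vanishes
  have hcross2 : ∑ a, (v a:ℂ) * ip (∑ j, R a j) (∑ j, E a j) = 0 := by
    have step1 : (∑ a : Fin m, (v a:ℂ) * ip (∑ j : Fin d, R a j) (∑ j : Fin d, E a j))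
        = ∑ a : Fin m, ip 1 ((v a:ℂ) • ∑ j : Fin d, E a j) := by
      refine Finset.sum_congr rfl fun a _ => ?_
      rw [hsumR, ip_smul_right]
    rw [step1, ← ip_sum_right, hE1, ip_zero_right]
  -- completing the square
  have hsq : ∀ (X : Fin d → Matrix (Fin d) (Fin d) ℂ),
      ∑ j, frobSq (X j - (d:ℂ)⁻¹ • ∑ k, X k)
        = (∑ j, frobSq (X j)) - (d:ℝ)⁻¹ * frobSq (∑ j, X j) := by
    intro X
    have h2 : ∑ j, (ip (X j) ((d:ℂ)⁻¹ • ∑ k, X k)).re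
        = (d:ℝ)⁻¹ * frobSq (∑ k, X k) := by
      rw [← Complex.re_sum, ← ip_sum_left, ip_smul_right, hcast, Complex.re_ofReal_mul,
        frobSq_eq_ip]
    have step1 : (∑ j : Fin d, frobSq (X j - (d:ℂ)⁻¹ • ∑ k, X k))
        = ∑ j : Fin d, (frobSq (X j) + (d:ℝ)⁻¹^2 * frobSq (∑ k, X k)
            - 2 * (ip (X j) ((d:ℂ)⁻¹ • ∑ k, X k)).re) := by
      refine Finset.sum_congr rfl fun j _ => ?_
      rw [frobSq_sub, hcast, frobSq_real_smul]
    have step2 : (∑ j : Fin d, (frobSq (X j) + (d:ℝ)⁻¹^2 * frobSq (∑ k, X k)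
            - 2 * (ip (X j) ((d:ℂ)⁻¹ • ∑ k, X k)).re))
        = (∑ j : Fin d, frobSq (X j)) + (d:ℝ) * ((d:ℝ)⁻¹^2 * frobSq (∑ k, X k))
            - 2 * ((d:ℝ)⁻¹ * frobSq (∑ k, X k)) := by
      rw [Finset.sum_sub_distrib, Finset.sum_add_distrib, Finset.sum_const,
        Finset.card_univ, Fintype.card_fin, nsmul_eq_mul, ← Finset.mul_sum, h2]
    rw [step1, step2]
    field_simp
    ring
  -- the average matrices
  set Ebar : Fin m → Matrix (Fin d) (Fin d) ℂ := fun a => (d:ℂ)⁻¹ • ∑ j, E a j with hEbar_def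
  -- per-index decomposition
  have hper : ∀ a, ((∑ j, frobSq (Q a j)) - (d : ℝ)⁻¹ * frobSq (∑ j, Q a j))
      = ((∑ j, frobSq (R a j)) - (d : ℝ)⁻¹ * frobSq (∑ j, R a j))
        + (∑ j, frobSq (E a j - Ebar a))
        + 2 * ((∑ j, (ip (R a j) (E a j)).re)
          - (d:ℝ)⁻¹ * (ip (∑ j, R a j) (∑ j, E a j)).re) := by
    intro a
    have hQsum : ∑ j, Q a j = (∑ j, R a j) + ∑ j, E a j := by
      rw [← Finset.sum_add_distrib]
      exact Finset.sum_congr rfl fun j _ => hQRE a j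
    have h1 : ∑ j, frobSq (Q a j)
        = (∑ j, frobSq (R a j)) + (∑ j, frobSq (E a j))
          + 2 * ∑ j, (ip (R a j) (E a j)).re := by
      rw [Finset.mul_sum, ← Finset.sum_add_distrib, ← Finset.sum_add_distrib]
      refine Finset.sum_congr rfl fun j _ => ?_
      rw [hQRE a j, frobSq_add]
    have h2 : frobSq (∑ j, Q a j)
        = frobSq (∑ j, R a j) + frobSq (∑ j, E a j)
          + 2 * (ip (∑ j, R a j) (∑ j, E a j)).re := by
      rw [hQsum, frobSq_add]
    have h3 : ∑ j, frobSq (E a j - Ebar a)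
        = (∑ j, frobSq (E a j)) - (d:ℝ)⁻¹ * frobSq (∑ j, E a j) := by
      rw [hEbar_def]
      exact hsq (E a)
    rw [h1, h2, h3]
    ring
  -- the weighted cross terms vanish (real parts)
  have hre1 : ∑ a, v a * (∑ j, (ip (R a j) (E a j)).re) = 0 := by
    have h : ∑ a, v a * (∑ j, (ip (R a j) (E a j)).re)
        = (∑ a, ∑ j, (v a:ℂ) * ip (R a j) (E a j)).re := by
      rw [Complex.re_sum]
      refine Finset.sum_congr rfl fun a _ => ?_
      rw [Complex.re_sum, Finset.mul_sum]
      exact Finset.sum_congr rfl fun j _ => (Complex.re_ofReal_mul _ _).symm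
    rw [h, hcross1, Complex.zero_re]
  have hre2 : ∑ a, v a * (ip (∑ j, R a j) (∑ j, E a j)).re = 0 := by
    have h : ∑ a, v a * (ip (∑ j, R a j) (∑ j, E a j)).re
        = (∑ a, (v a:ℂ) * ip (∑ j, R a j) (∑ j, E a j)).re := by
      rw [Complex.re_sum]
      exact Finset.sum_congr rfl fun a _ => (Complex.re_ofReal_mul _ _).symm
    rw [h, hcross2, Complex.zero_re]
  -- main identity
  have hMain : ∑ a, v a * ((∑ j, frobSq (Q a j)) - (d : ℝ)⁻¹ * frobSq (∑ j, Q a j))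
      = (∑ a, v a * ((∑ j, frobSq (R a j)) - (d : ℝ)⁻¹ * frobSq (∑ j, R a j)))
        + ∑ a, v a * ∑ j, frobSq (E a j - Ebar a) := by
    have hstep : ∑ a, v a * ((∑ j, frobSq (Q a j)) - (d : ℝ)⁻¹ * frobSq (∑ j, Q a j))
        = ∑ a, (v a * ((∑ j, frobSq (R a j)) - (d : ℝ)⁻¹ * frobSq (∑ j, R a j))
            + v a * (∑ j, frobSq (E a j - Ebar a))
            + 2 * (v a * (∑ j, (ip (R a j) (E a j)).re))
            - 2 * (d:ℝ)⁻¹ * (v a * (ip (∑ j, R a j) (∑ j, E a j)).re)) := by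
      refine Finset.sum_congr rfl fun a _ => ?_
      rw [hper a]
      ring
    rw [hstep, Finset.sum_sub_distrib, Finset.sum_add_distrib, Finset.sum_add_distrib,
      ← Finset.mul_sum, ← Finset.mul_sum, hre1, hre2]
    ring
  have hT_nonneg : 0 ≤ ∑ a, v a * ∑ j, frobSq (E a j - Ebar a) :=
    Finset.sum_nonneg fun a _ => mul_nonneg (hv a).le
      (Finset.sum_nonneg fun j _ => frobSq_nonneg _)
  constructor
  · rw [ge_iff_le, hMain]
    linarith
  · constructor
    · intro heq
      have hT0 : ∑ a, v a * ∑ j, frobSq (E a j - Ebar a) = 0 := by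
        rw [hMain] at heq
        linarith
      have hzero : ∀ a j, E a j - Ebar a = 0 := by
        intro a j
        have ha := (Finset.sum_eq_zero_iff_of_nonneg (fun a _ => mul_nonneg (hv a).le
          (Finset.sum_nonneg fun j _ => frobSq_nonneg _))).mp hT0 a (Finset.mem_univ a)
        have hinner : ∑ j, frobSq (E a j - Ebar a) = 0 := by
          rcases mul_eq_zero.mp ha with h | h
          · exact absurd h (hv a).ne'
          · exact h
        have hj := (Finset.sum_eq_zero_iff_of_nonneg
          (fun j _ => frobSq_nonneg _)).mp hinner j (Finset.mem_univ j)
        exact (frobSq_eq_zero_iff _).mp hj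
      refine ⟨Ebar, ?_, ?_⟩
      · have step1 : (∑ a : Fin m, (v a:ℂ) • Ebar a)
            = (d:ℂ)⁻¹ • ∑ a : Fin m, (v a:ℂ) • (∑ j : Fin d, E a j) := by
          rw [Finset.smul_sum]
          refine Finset.sum_congr rfl fun a _ => ?_
          rw [hEbar_def]
          rw [smul_comm]
        rw [step1, hE1, smul_zero]
      · intro a j
        have hEj : E a j = Ebar a := by
          have := hzero a j
          linear_combination (norm := module) this
        rw [hQRE a j, hEj]
    · rintro ⟨D, _, hQD⟩
      have hED : ∀ a j, E a j = D a := by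
        intro a j
        simp only [hE_def]
        rw [hQD a j]
        abel
      have hEbarD : ∀ a, Ebar a = D a := by
        intro a
        rw [hEbar_def]
        simp only [hED]
        rw [Finset.sum_const, Finset.card_univ, Fintype.card_fin,
          ← Nat.cast_smul_eq_nsmul ℂ, smul_smul, inv_mul_cancel₀ hdC, one_smul]
      have hT0 : ∑ a, v a * ∑ j, frobSq (E a j - Ebar a) = 0 := by
        refine Finset.sum_eq_zero fun a _ => ?_
        have : ∀ j : Fin d, frobSq (E a j - Ebar a) = 0 := by
          intro j
          rw [hED a j, hEbarD a, sub_self, frobSq_zero]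
        rw [Finset.sum_congr rfl fun j _ => this j, Finset.sum_const, smul_zero, mul_zero]
      rw [hMain, hT0, add_zero]
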